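/- Let β : ℝ → ℝ be real-analytic on an open interval containing 0 with β(0) = 0 and β'(0) = 0, and let C ∈ ℝ. Define F(r) = ∫₀^r (e^{2β(s)} - 1)/s² ds and κ(r) = -log(1 - r·F(r) - r·C) + β(r). Then for every r in a neighbourhood of 0 on which 1 - s·F(s) - s·C > 0 for all s between 0 and r, one has ∫₀^r e^{2κ(s)} ds = r·e^{κ(r) - β(r)}. -/

import Mathlib

/-- For `β` real-analytic near `0` with `β(0) = β'(0) = 0`,
`F(r) = ∫₀^r (e^{2β(s)}-1)/s² ds` and `κ(r) = -log(1 - r·F(r) - r·C) + β(r)`, one has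
`∫₀^r e^{2κ(s)} ds = r·e^{κ(r)-β(r)}` for every `r` near `0` such that
`1 - s·F(s) - s·C > 0` for all `s` between `0` and `r`. -/
theorem stmt_7 (a b : ℝ) (ha : a < 0) (hb : 0 < b)
    (β : ℝ → ℝ) (hβ : AnalyticOnNhd ℝ β (Set.Ioo a b))
    (hβ0 : β 0 = 0) (hβ'0 : deriv β 0 = 0) (C : ℝ)
    (F : ℝ → ℝ) (hF : ∀ r : ℝ, F r = ∫ s in (0:ℝ)..r, (Real.exp (2 * β s) - 1) / s ^ 2)
    (κ : ℝ → ℝ) (hκ : ∀ r : ℝ, κ r = -Real.log (1 - r * F r - r * C) + β r) :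
    ∀ᶠ r in nhds (0:ℝ), (∀ s ∈ Set.uIcc (0:ℝ) r, 0 < 1 - s * F s - s * C) →
      ∫ s in (0:ℝ)..r, Real.exp (2 * κ s) = r * Real.exp (κ r - β r) := by
  have h0ab : (0:ℝ) ∈ Set.Ioo a b := ⟨ha, hb⟩
  have hβan0 : AnalyticAt ℝ β 0 := hβ 0 h0ab
  set φ : ℝ → ℝ := fun s => Real.exp (2 * β s) - 1 with hφdef
  have hφan : AnalyticAt ℝ φ 0 := ((analyticAt_const.mul hβan0).rexp).sub analyticAt_const
  obtain ⟨p, hp⟩ := hφan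
  set h : ℝ → ℝ := dslope (dslope φ 0) 0 with hhdef
  have hq : HasFPowerSeriesAt (dslope φ 0) p.fslope 0 := hp.has_fpower_series_dslope_fslope
  have hh : AnalyticAt ℝ h 0 := hq.has_fpower_series_dslope_fslope.analyticAt
  have hφ0 : φ 0 = 0 := by simp [hφdef, hβ0]
  have hdβ : HasDerivAt β 0 0 := by
    have := hβan0.differentiableAt.hasDerivAt
    rwa [hβ'0] at this
  have hdφ : HasDerivAt φ (Real.exp (2 * β 0) * (2 * 0)) 0 :=
    ((hdβ.const_mul 2).exp).sub_const 1
  have hd1 : dslope φ 0 0 = 0 := by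
    rw [dslope_same]
    simpa using hdφ.deriv
  have key : ∀ s : ℝ, Real.exp (2 * β s) - 1 = s ^ 2 * h s := by
    intro s
    rcases eq_or_ne s 0 with rfl | hs
    · simp [hβ0]
    · have e1 : dslope φ 0 s = (φ s - φ 0) / (s - 0) := by
        rw [dslope_of_ne _ hs, slope_def_field]
      have e2 : h s = (dslope φ 0 s - dslope φ 0 0) / (s - 0) := by
        rw [hhdef, dslope_of_ne _ hs, slope_def_field]
      rw [show Real.exp (2 * β s) - 1 = φ s from rfl] at *
      rw [e2, e1, hφ0, hd1]
      field_simp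
      ring
  -- get a ball on which h is analytic and which lies in (a,b)
  have hev : ∀ᶠ s in nhds (0:ℝ), AnalyticAt ℝ h s ∧ s ∈ Set.Ioo a b :=
    hh.eventually_analyticAt.and (Filter.eventually_iff.2 (by
      exact Ioo_mem_nhds ha hb))
  obtain ⟨ε, hε0, hball⟩ := Metric.eventually_nhds_iff_ball.mp hev
  have hFh : ∀ t : ℝ, F t = ∫ s in (0:ℝ)..t, h s := by
    intro t
    rw [hF t]
    apply intervalIntegral.integral_congr_ae
    filter_upwards [MeasureTheory.compl_mem_ae_iff.mpr (MeasureTheory.measure_singleton (0:ℝ))]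
      with x hx _
    have hx0 : x ≠ 0 := by simpa using hx
    rw [key x, pow_two]
    field_simp
  have hFd : ∀ t ∈ Metric.ball (0:ℝ) ε, HasDerivAt F (h t) t := by
    intro t ht
    have hsubt : Set.uIcc (0:ℝ) t ⊆ Metric.ball 0 ε :=
      ((convex_ball (0:ℝ) ε).ordConnected).uIcc_subset (Metric.mem_ball_self hε0) ht
    have hcOn : ContinuousOn h (Set.uIcc 0 t) :=
      fun s hs => ((hball s (hsubt hs)).1.continuousAt).continuousWithinAt
    have hi : IntervalIntegrable h MeasureTheory.volume 0 t := hcOn.intervalIntegrable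
    have hm := ContinuousAt.stronglyMeasurableAtFilter (μ := MeasureTheory.volume)
      (Metric.isOpen_ball) (fun s hs => (hball s hs).1.continuousAt) t ht
    have hder := intervalIntegral.integral_hasDerivAt_right hi hm (hball t ht).1.continuousAt
    have hFe : F = fun u => ∫ s in (0:ℝ)..u, h s := funext hFh
    rw [hFe]
    exact hder
  filter_upwards [Metric.ball_mem_nhds (0:ℝ) hε0] with r hr hpos
  have hsub : Set.uIcc (0:ℝ) r ⊆ Metric.ball 0 ε :=
    ((convex_ball (0:ℝ) ε).ordConnected).uIcc_subset (Metric.mem_ball_self hε0) hr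
  have key2 : ∀ s ∈ Set.uIcc (0:ℝ) r,
      HasDerivAt (fun t => t / (1 - t * F t - t * C)) (Real.exp (2 * κ s)) s := by
    intro s hs
    have hsB := hsub hs
    have hGs : 0 < 1 - s * F s - s * C := hpos s hs
    have hda : HasDerivAt (fun t : ℝ => t * F t) (1 * F s + s * h s) s :=
      (hasDerivAt_id s).mul (hFd s hsB)
    have hdb : HasDerivAt (fun t : ℝ => 1 - t * F t - t * C)
        (0 - (1 * F s + s * h s) - 1 * C) s :=
      ((hasDerivAt_const s (1:ℝ)).sub hda).sub ((hasDerivAt_id s).mul_const C)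
    have hdc : HasDerivAt (fun t => t / (1 - t * F t - t * C))
        ((1 * (1 - s * F s - s * C) - s * (0 - (1 * F s + s * h s) - 1 * C))
          / (1 - s * F s - s * C) ^ 2) s :=
      (hasDerivAt_id' s).div hdb (ne_of_gt hGs)
    convert hdc using 1
    have hnum : (1:ℝ) * (1 - s * F s - s * C) - s * (0 - (1 * F s + s * h s) - 1 * C)
        = Real.exp (2 * β s) := by
      linear_combination -key s
    rw [hnum, hκ s]
    have hlog : Real.exp (Real.log (1 - s * F s - s * C)) = 1 - s * F s - s * C :=
      Real.exp_log hGs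
    rw [show 2 * (-Real.log (1 - s * F s - s * C) + β s)
        = 2 * β s + (-(Real.log (1 - s * F s - s * C)) + -(Real.log (1 - s * F s - s * C)))
        by ring, Real.exp_add, Real.exp_add, Real.exp_neg, hlog]
    field_simp
  have hκfun : (fun s => Real.exp (2 * κ s))
      = fun s => Real.exp (2 * (-Real.log (1 - s * F s - s * C) + β s)) :=
    funext fun s => by rw [hκ s]
  have hcontκ : ContinuousOn (fun s => Real.exp (2 * κ s)) (Set.uIcc (0:ℝ) r) := by
    rw [hκfun]
    intro s hs
    have hsB := hsub hs
    have hFc : ContinuousAt F s := (hFd s hsB).continuousAt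
    have hGc : ContinuousAt (fun t => 1 - t * F t - t * C) s :=
      (continuousAt_const.sub (continuousAt_id.mul hFc)).sub
        (continuousAt_id.mul continuousAt_const)
    have hβc : ContinuousAt β s := (hβ s (hball s hsB).2).continuousAt
    have hlogc : ContinuousAt (fun t => Real.log (1 - t * F t - t * C)) s :=
      hGc.log (ne_of_gt (hpos s hs))
    exact ContinuousAt.continuousWithinAt
      ((((hlogc.neg.add hβc).const_mul 2).rexp :
        ContinuousAt (fun x => Real.exp (2 * (-Real.log (1 - x * F x - x * C) + β x))) s))
  have hInt : IntervalIntegrable (fun s => Real.exp (2 * κ s)) MeasureTheory.volume 0 r :=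
    hcontκ.intervalIntegrable
  have hmain := intervalIntegral.integral_eq_sub_of_hasDerivAt key2 hInt
  rw [hmain, hκ r]
  have hGr : 0 < 1 - r * F r - r * C := hpos r Set.right_mem_uIcc
  rw [show -Real.log (1 - r * F r - r * C) + β r - β r
      = -Real.log (1 - r * F r - r * C) by ring,
    Real.exp_neg, Real.exp_log hGr]
  simp
  rw [div_eq_mul_inv]
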